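/- The transition maps of the hemispherical trivializations preserve the connection form: with τⱼ = −Σ_{i≠j}(xᵢdyᵢ − yᵢdxᵢ) and the transition map Ψₖⱼ of the Hopf bundle trivializations, one has Ψₖⱼ*((1/2)(dt − τₖ)) = (1/2)(dt − τⱼ) on (Bⱼ∖{zₖ=0}) × S¹. -/

import Mathlib

noncomputable def projC (n : ℕ) (p : Fin n) : (Fin n → ℂ) →L[ℝ] ℂ := ContinuousLinearMap.proj p

theorem stmt14_aux (n : ℕ) (p : Fin n) (z : Fin n → ℂ) :
    HasFDerivAt (fun y : Fin n → ℂ => Complex.normSq (y p))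
      (((z p).re • (Complex.reCLM.comp (projC n p)) + (z p).re • (Complex.reCLM.comp (projC n p))) +
       ((z p).im • (Complex.imCLM.comp (projC n p)) + (z p).im • (Complex.imCLM.comp (projC n p)))) z := by
  have hre : HasFDerivAt (fun y : Fin n → ℂ => (y p).re) (Complex.reCLM.comp (projC n p)) z :=
    (Complex.reCLM.comp (projC n p)).hasFDerivAt
  have him : HasFDerivAt (fun y : Fin n → ℂ => (y p).im) (Complex.imCLM.comp (projC n p)) z :=
    (Complex.imCLM.comp (projC n p)).hasFDerivAt
  have h := (hre.mul hre).add (him.mul him)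
  have hfun : (fun y : Fin n → ℂ => Complex.normSq (y p)) =
      fun y => (y p).re * (y p).re + (y p).im * (y p).im := by
    funext y; exact Complex.normSq_apply _
  rw [hfun]
  exact h



set_option maxHeartbeats 1000000 in
/-- The transition maps of the hemispherical trivializations preserve the
connection form: `Ψₖⱼ*((1/2)(dt − τₖ)) = (1/2)(dt − τⱼ)` on `(Bⱼ∖{zₖ=0}) × S¹`, where
`τ_l = −Σ_{i≠l}(xᵢdyᵢ − yᵢdxᵢ)`.  Concretely, the base part of `Ψₖⱼ` is the map `W`
(multiplication of each coordinate by `z̄ₖ/|zₖ|`, `j`-slot `(z̄ₖ/|zₖ|)√(1−|z|²)`, `k`-slot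
dropped) and the circle part is `t ↦ t + θₖ`, whose differential sends a tangent vector
`(v, s)` to `(v', s')` with `v' = DW(z)v` and
`s' = s + dθₖ(v) = s + ((z k).re (v k).im − (z k).im (v k).re)/|zₖ|²`.  The claim is
`(1/2)(s' − τₖ(w)(v')) = (1/2)(s − τⱼ(z)(v))`. -/
theorem stmt_14 (n : ℕ) (j k : Fin n) (hjk : j ≠ k)
    (W : (Fin n → ℂ) → (Fin n → ℂ))
    (hW : ∀ z i, W z i = if i = k then 0
        else if i = j then (starRingEnd ℂ (z k) / (‖z k‖ : ℂ)) *
          ((Real.sqrt (1 - ∑ p ∈ Finset.univ.erase j, Complex.normSq (z p)) : ℝ) : ℂ)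
        else z i * (starRingEnd ℂ (z k) / (‖z k‖ : ℂ)))
    (z : Fin n → ℂ) (hzj : z j = 0)
    (hz : ∑ p ∈ Finset.univ.erase j, Complex.normSq (z p) < 1)
    (hzk : z k ≠ 0)
    (t s : ℝ) (v : Fin n → ℂ) (hvj : v j = 0)
    (w : Fin n → ℂ) (hw : w = W z)
    (v' : Fin n → ℂ) (hv' : v' = (fderiv ℝ W z) v)
    (s' : ℝ)
    (hs' : s' = s + ((z k).re * (v k).im - (z k).im * (v k).re) / Complex.normSq (z k)) :
    (1 / 2) * (s' + ∑ i ∈ Finset.univ.erase k,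
        ((w i).re * (v' i).im - (w i).im * (v' i).re))
      = (1 / 2) * (s + ∑ i ∈ Finset.univ.erase j,
        ((z i).re * (v i).im - (z i).im * (v i).re)) := by
    classical
  -- rewrite W into a normal form using sqrt ∘ normSq and multiplication by a real inverse
  have hWfun : W = fun (y : Fin n → ℂ) (i : Fin n) => if i = k then (0:ℂ)
      else if i = j then (starRingEnd ℂ (y k) * (((Real.sqrt (Complex.normSq (y k)))⁻¹ : ℝ) : ℂ)) *
        ((Real.sqrt (1 - ∑ p ∈ Finset.univ.erase j, Complex.normSq (y p)) : ℝ) : ℂ)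
      else y i * (starRingEnd ℂ (y k) * (((Real.sqrt (Complex.normSq (y k)))⁻¹ : ℝ) : ℂ)) := by
    funext y i
    rw [hW y i]
    simp only [div_eq_mul_inv, Complex.ofReal_inv, Complex.norm_def]
  subst hWfun
  -- basic scalar facts
  have hapos : 0 < Complex.normSq (z k) := Complex.normSq_pos.2 hzk
  set r : ℝ := Real.sqrt (Complex.normSq (z k)) with hrdef
  have hr0 : 0 < r := Real.sqrt_pos.2 hapos
  have hr2 : r ^ 2 = Complex.normSq (z k) := Real.sq_sqrt hapos.le
  set S : ℝ := ∑ p ∈ Finset.univ.erase j, Complex.normSq (z p) with hSdef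
  have hSpos : 0 < 1 - S := by linarith
  set cc : ℝ := Real.sqrt (1 - S) with hccdef
  have hcc0 : 0 < cc := Real.sqrt_pos.2 hSpos
  have hcc2 : cc ^ 2 = 1 - S := Real.sq_sqrt hSpos.le
  -- direction scalars and vectors
  set d1v : ℝ := (z k).re * (v k).re + (z k).im * (v k).im with hd1v
  set dSv : ℝ := ∑ p ∈ Finset.univ.erase j, ((z p).re * (v p).re + (z p).re * (v p).re +
    ((z p).im * (v p).im + (z p).im * (v p).im)) with hdSv
  set dθ : ℝ := (z k).re * (v k).im - (z k).im * (v k).re with hdθ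
  set U : ℂ := starRingEnd ℂ (z k) * ((r⁻¹ : ℝ) : ℂ) with hU
  set LuV : ℂ := ((r⁻¹ : ℝ) : ℂ) * starRingEnd ℂ (v k) - ((d1v / r ^ 3 : ℝ) : ℂ) * starRingEnd ℂ (z k)
    with hLuV
  set dcv : ℝ := (1 / (2 * cc)) * (-dSv) with hdcv
  -- derivative chain for the common factor  conj (y k) / ‖y k‖
  have hnsqk := stmt14_aux n k z
  have hsqrtk := hnsqk.sqrt hapos.ne'
  have hinvk := (hasDerivAt_inv (x := Real.sqrt (Complex.normSq (z k))) hr0.ne').comp_hasFDerivAt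
    z hsqrtk
  simp only [Function.comp_def] at hinvk
  have hinvkC := Complex.ofRealCLM.hasFDerivAt.comp z hinvk
  simp only [Function.comp_def, Complex.ofRealCLM_apply] at hinvkC
  have hconjk : HasFDerivAt (fun y : Fin n → ℂ => starRingEnd ℂ (y k))
      (Complex.conjCLE.toContinuousLinearMap.comp (projC n k)) z := by
    exact (Complex.conjCLE.toContinuousLinearMap.comp (projC n k)).hasFDerivAt
  have hu := hconjk.fun_mul' hinvkC
  -- derivative chain for the square-root factor of the j-th component
  have hSder := HasFDerivAt.fun_sum (u := Finset.univ.erase j) (fun p _ => stmt14_aux n p z)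
  have h1S := hSder.const_sub 1
  have hcder := h1S.sqrt (by rw [← hSdef]; exact hSpos.ne')
  have hcderC := Complex.ofRealCLM.hasFDerivAt.comp z hcder
  simp only [Function.comp_def, Complex.ofRealCLM_apply] at hcderC
  have hFj := hu.fun_mul' hcderC
  -- the component-wise derivative of W, evaluated at the direction v
  have key : ∀ i : Fin n, ∃ L : (Fin n → ℂ) →L[ℝ] ℂ,
      HasFDerivAt (fun y : Fin n → ℂ => if i = k then (0:ℂ)
        else if i = j then (starRingEnd ℂ (y k) * (((Real.sqrt (Complex.normSq (y k)))⁻¹ : ℝ) : ℂ)) *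
          ((Real.sqrt (1 - ∑ p ∈ Finset.univ.erase j, Complex.normSq (y p)) : ℝ) : ℂ)
        else y i * (starRingEnd ℂ (y k) * (((Real.sqrt (Complex.normSq (y k)))⁻¹ : ℝ) : ℂ))) L z ∧
      L v = (if i = k then 0 else if i = j then (cc : ℂ) * LuV + ((dcv : ℝ) : ℂ) * U
        else U * v i + z i * LuV) := by
    intro i
    by_cases hik : i = k
    · refine ⟨0, ?_, ?_⟩
      · have heq : (fun y : Fin n → ℂ => if i = k then (0:ℂ)
            else if i = j then (starRingEnd ℂ (y k) * (((Real.sqrt (Complex.normSq (y k)))⁻¹ : ℝ) : ℂ)) *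
              ((Real.sqrt (1 - ∑ p ∈ Finset.univ.erase j, Complex.normSq (y p)) : ℝ) : ℂ)
            else y i * (starRingEnd ℂ (y k) * (((Real.sqrt (Complex.normSq (y k)))⁻¹ : ℝ) : ℂ)))
            = fun _ => (0:ℂ) := by
          funext y; rw [if_pos hik]
        rw [heq]; exact hasFDerivAt_const 0 z
      · rw [if_pos hik]; simp
    · by_cases hij : i = j
      · have heq : (fun y : Fin n → ℂ => if i = k then (0:ℂ)
              else if i = j then (starRingEnd ℂ (y k) * (((Real.sqrt (Complex.normSq (y k)))⁻¹ : ℝ) : ℂ)) *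
                ((Real.sqrt (1 - ∑ p ∈ Finset.univ.erase j, Complex.normSq (y p)) : ℝ) : ℂ)
              else y i * (starRingEnd ℂ (y k) * (((Real.sqrt (Complex.normSq (y k)))⁻¹ : ℝ) : ℂ)))
              = fun y : Fin n → ℂ =>
                (starRingEnd ℂ (y k) * (((Real.sqrt (Complex.normSq (y k)))⁻¹ : ℝ) : ℂ)) *
                ((Real.sqrt (1 - ∑ p ∈ Finset.univ.erase j, Complex.normSq (y p)) : ℝ) : ℂ) := by
            funext y; rw [if_neg hik, if_pos hij]
        refine ⟨_, heq.symm ▸ hFj, ?_⟩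
        rw [if_neg hik, if_pos hij]
        simp only [ContinuousLinearMap.add_apply, ContinuousLinearMap.coe_smul', Pi.smul_apply,
          ContinuousLinearMap.comp_apply, ContinuousLinearMap.smulRight_apply,
          ContinuousLinearMap.coe_sum', Finset.sum_apply, ContinuousLinearMap.neg_apply, projC,
          ContinuousLinearMap.proj_apply, Complex.ofRealCLM_apply, Complex.reCLM_apply,
          Complex.imCLM_apply, ContinuousLinearEquiv.coe_coe, Complex.conjCLE_apply,
          smul_eq_mul, Complex.real_smul, op_smul_eq_mul]
        simp only [hU, hLuV, hdcv, hccdef, hrdef, hSdef, hd1v, hdSv]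
        have h1 : Real.sqrt (Complex.normSq (z k)) ≠ 0 := by rw [← hrdef]; exact hr0.ne'
        have h2 : Real.sqrt (1 - ∑ p ∈ Finset.univ.erase j, Complex.normSq (z p)) ≠ 0 := by
          rw [← hSdef, ← hccdef]; exact hcc0.ne'
        push_cast
        field_simp
        ring
      · have hFi := HasFDerivAt.fun_mul' (a := fun y : Fin n → ℂ => y i)
            (by exact (projC n i).hasFDerivAt) hu
        have heq : (fun y : Fin n → ℂ => if i = k then (0:ℂ)
              else if i = j then (starRingEnd ℂ (y k) * (((Real.sqrt (Complex.normSq (y k)))⁻¹ : ℝ) : ℂ)) *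
                ((Real.sqrt (1 - ∑ p ∈ Finset.univ.erase j, Complex.normSq (y p)) : ℝ) : ℂ)
              else y i * (starRingEnd ℂ (y k) * (((Real.sqrt (Complex.normSq (y k)))⁻¹ : ℝ) : ℂ)))
              = fun y : Fin n → ℂ =>
                y i * (starRingEnd ℂ (y k) * (((Real.sqrt (Complex.normSq (y k)))⁻¹ : ℝ) : ℂ)) := by
            funext y; rw [if_neg hik, if_neg hij]
        refine ⟨_, heq.symm ▸ hFi, ?_⟩
        rw [if_neg hik, if_neg hij]
        simp only [ContinuousLinearMap.add_apply, ContinuousLinearMap.coe_smul', Pi.smul_apply,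
          ContinuousLinearMap.comp_apply, ContinuousLinearMap.smulRight_apply,
          ContinuousLinearMap.coe_sum', Finset.sum_apply, ContinuousLinearMap.neg_apply, projC,
          ContinuousLinearMap.proj_apply, Complex.ofRealCLM_apply, Complex.reCLM_apply,
          Complex.imCLM_apply, ContinuousLinearEquiv.coe_coe, Complex.conjCLE_apply,
          smul_eq_mul, Complex.real_smul, op_smul_eq_mul]
        simp only [hU, hLuV, hdcv, hccdef, hrdef, hSdef, hd1v, hdSv]
        have h1 : Real.sqrt (Complex.normSq (z k)) ≠ 0 := by rw [← hrdef]; exact hr0.ne'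
        push_cast
        field_simp
        ring
  -- directional derivative values of each component
  have hv'i : ∀ i : Fin n, v' i = (if i = k then 0
      else if i = j then (cc : ℂ) * LuV + ((dcv : ℝ) : ℂ) * U else U * v i + z i * LuV) := by
    intro i
    obtain ⟨L, hL, hLv⟩ := key i
    have hdiff : ∀ p : Fin n, DifferentiableAt ℝ (fun y : Fin n → ℂ => if p = k then (0:ℂ)
        else if p = j then (starRingEnd ℂ (y k) * (((Real.sqrt (Complex.normSq (y k)))⁻¹ : ℝ) : ℂ)) *
          ((Real.sqrt (1 - ∑ p ∈ Finset.univ.erase j, Complex.normSq (y p)) : ℝ) : ℂ)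
        else y p * (starRingEnd ℂ (y k) * (((Real.sqrt (Complex.normSq (y k)))⁻¹ : ℝ) : ℂ))) z :=
      fun p => ((key p).choose_spec.1).differentiableAt
    rw [hv', fderiv_pi hdiff]
    rw [ContinuousLinearMap.pi_apply]
    rw [hL.fderiv]
    exact hLv
  
  -- values of w on relevant indices
  have hUnsq : U.re * U.re + U.im * U.im = 1 := by
    rw [← Complex.normSq_apply, hU, map_mul, Complex.normSq_conj, Complex.normSq_ofReal, ← hr2]
    field_simp
  have hwj : w j = U * (cc : ℂ) := by
    rw [hw]
    show (if j = k then (0:ℂ) else if j = j then _ else _) = _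
    rw [if_neg hjk, if_pos rfl, hU, hrdef, hccdef, hSdef]
  have hwi : ∀ i : Fin n, i ≠ k → i ≠ j → w i = z i * U := by
    intro i hik0 hij0
    rw [hw]
    show (if i = k then (0:ℂ) else if i = j then _ else _) = _
    rw [if_neg hik0, if_neg hij0, hU, hrdef]
  -- key imaginary part
  have hImDu : (starRingEnd ℂ U * LuV).im = -(dθ / Complex.normSq (z k)) := by
    rw [hU, hLuV, hdθ, ← hr2]
    simp only [map_mul, Complex.conj_conj, Complex.conj_ofReal, Complex.mul_im, Complex.mul_re,
      Complex.sub_re, Complex.sub_im, Complex.ofReal_re, Complex.ofReal_im, Complex.conj_re,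
      Complex.conj_im]
    field_simp
    ring
  -- membership facts and sum splitting
  have hjmem : j ∈ Finset.univ.erase k := Finset.mem_erase.2 ⟨hjk, Finset.mem_univ j⟩
  have hkmem : k ∈ Finset.univ.erase j := Finset.mem_erase.2 ⟨Ne.symm hjk, Finset.mem_univ k⟩
  rw [← Finset.add_sum_erase _ _ hjmem, ← Finset.add_sum_erase _ _ hkmem,
    Finset.erase_right_comm (s := Finset.univ)]
  have hfj : (w j).re * (v' j).im - (w j).im * (v' j).re
      = (1 - S) * (starRingEnd ℂ U * LuV).im := by
    rw [hwj, hv'i j, if_neg hjk, if_pos rfl, ← hcc2]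
    simp only [Complex.mul_re, Complex.mul_im, Complex.add_re, Complex.add_im,
      Complex.ofReal_re, Complex.ofReal_im, map_mul, Complex.conj_re, Complex.conj_im]
    ring
  have hsplit : ∀ i ∈ (Finset.univ.erase j).erase k,
      (w i).re * (v' i).im - (w i).im * (v' i).re
      = ((z i).re * (v i).im - (z i).im * (v i).re)
        + Complex.normSq (z i) * (starRingEnd ℂ U * LuV).im := by
    intro i hi
    have hik0 : i ≠ k := (Finset.mem_erase.1 hi).1
    have hij0 : i ≠ j := (Finset.mem_erase.1 (Finset.mem_erase.1 hi).2).1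
    rw [hwi i hik0 hij0, hv'i i, if_neg hik0, if_neg hij0]
    simp only [Complex.mul_re, Complex.mul_im, Complex.add_re, Complex.add_im,
      Complex.normSq_apply, map_mul, Complex.conj_re, Complex.conj_im]
    linear_combination ((z i).re * (v i).im - (z i).im * (v i).re) * hUnsq
  rw [Finset.sum_congr rfl hsplit, Finset.sum_add_distrib, ← Finset.sum_mul]
  have hST : S = Complex.normSq (z k) + ∑ i ∈ (Finset.univ.erase j).erase k, Complex.normSq (z i) := by
    rw [hSdef, ← Finset.add_sum_erase _ _ hkmem]
  rw [hfj, hImDu, hs']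
  have hdθk : (z k).re * (v k).im - (z k).im * (v k).re = dθ := hdθ.symm
  rw [hdθk]
  rw [hST]
  field_simp
  ring
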